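/- Let n be a positive integer and σ a real number with 0 < σ < 1. Then the series T(x, y) = Σ_{k=n}^∞ σ^k φ_k(x) φ_k(y) converges for all real x, y, the resulting function is differentiable in x and in y with the partial derivatives obtained by term-wise differentiation, and for all real x, y: (x + ∂_x)T(x, y) − σ (y − ∂_y)T(x, y) = 2 σ^n a_n φ_{n−1}(x) φ_n(y), where a_n = √(n/2). -/

import Mathlib

/-- The physicist Hermite polynomials, as real functions:
`H₀ = 1`, `H₁(x) = 2x`, `H_{n+2}(x) = 2x·H_{n+1}(x) − 2(n+1)·H_n(x)`. -/
noncomputable def physHermite : ℕ → ℝ → ℝ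
  | 0 => fun _ => 1
  | 1 => fun x => 2 * x
  | (n + 2) => fun x => 2 * x * physHermite (n + 1) x - 2 * (n + 1) * physHermite n x

/-- The normalized Hermite polynomials `p_k(x) = H_k(x)/√(2^k k! √π)`. -/
noncomputable def normHermite (k : ℕ) (x : ℝ) : ℝ :=
  physHermite k x / Real.sqrt (2 ^ k * k.factorial * Real.sqrt Real.pi)

/-- The harmonic oscillator functions `φ_k(x) = e^{−x²/2} p_k(x)`. -/
noncomputable def oscFun (k : ℕ) (x : ℝ) : ℝ :=
  Real.exp (-x ^ 2 / 2) * normHermite k x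

/-- The tail kernel `T(x, y) = Σ_{k=n}^∞ σ^k φ_k(x) φ_k(y)` from the proof of Lemma 3 of
Tracy–Widom, "Differential Equations for Dyson Processes" (indexed by `k = n + j`). -/
noncomputable def hermiteTail (n : ℕ) (σ : ℝ) (x y : ℝ) : ℝ :=
  ∑' j : ℕ, σ ^ (n + j) * oscFun (n + j) x * oscFun (n + j) y

noncomputable def hermC (k : ℕ) : ℝ := Real.sqrt (2 ^ k * k.factorial * Real.sqrt Real.pi)

lemma hermC_pos (k : ℕ) : 0 < hermC k := by
  apply Real.sqrt_pos.2
  positivity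

lemma hermC_succ (k : ℕ) : hermC (k + 1) = Real.sqrt (2 * (k + 1)) * hermC k := by
  rw [hermC, hermC, ← Real.sqrt_mul (by positivity)]
  congr 1
  push_cast [Nat.factorial_succ]
  ring

lemma physHermite_rec (k : ℕ) (x : ℝ) :
    physHermite (k + 1) x = 2 * x * physHermite k x - 2 * k * physHermite (k - 1) x := by
  cases k with
  | zero => simp [physHermite]
  | succ m =>
    have h : m + 1 - 1 = m := rfl
    rw [h]
    show 2 * x * physHermite (m + 1) x - 2 * ((m : ℝ) + 1) * physHermite m x = _
    push_cast
    ring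

lemma hasDerivAt_physHermite (k : ℕ) (x : ℝ) :
    HasDerivAt (physHermite k) (2 * k * physHermite (k - 1) x) x := by
  induction k using Nat.strong_induction_on generalizing x with
  | _ k ih =>
    match k with
    | 0 => simpa [physHermite] using hasDerivAt_const x (1:ℝ)
    | 1 =>
      have h2 : HasDerivAt (fun y : ℝ => 2 * y) 2 x := by
        simpa using (hasDerivAt_id x).const_mul (2:ℝ)
      have he : physHermite 1 = fun y : ℝ => 2 * y := rfl
      rw [he]
      convert h2 using 1
      norm_num [physHermite]
    | (m + 2) =>
      have h1 : HasDerivAt (physHermite (m + 1)) (2 * ((m:ℝ)+1) * physHermite m x) x := by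
        have := ih (m+1) (by omega) x
        simpa using this
      have h0 : HasDerivAt (physHermite m) (2 * (m:ℝ) * physHermite (m - 1) x) x :=
        ih m (by omega) x
      have hx : HasDerivAt (fun y : ℝ => 2 * y * physHermite (m+1) y - 2 * ((m:ℝ)+1) * physHermite m y)
          ((2 * physHermite (m+1) x + 2 * x * (2 * ((m:ℝ)+1) * physHermite m x))
            - 2 * ((m:ℝ)+1) * (2 * (m:ℝ) * physHermite (m - 1) x)) x := by
        have ha : HasDerivAt (fun y : ℝ => 2 * y) 2 x := by
          simpa using (hasDerivAt_id x).const_mul (2:ℝ)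
        exact ((ha.mul h1).sub (h0.const_mul (2 * ((m:ℝ)+1)))).congr_deriv (by ring)
      have hfun : physHermite (m + 2) = fun y : ℝ =>
          2 * y * physHermite (m+1) y - 2 * ((m:ℝ)+1) * physHermite m y := rfl
      rw [hfun]
      have hsub : m + 2 - 1 = m + 1 := rfl
      rw [hsub]
      convert hx using 1
      have hrec := physHermite_rec m x
      push_cast
      nlinarith [hrec]

lemma oscFun_eq (k : ℕ) (x : ℝ) : oscFun k x = Real.exp (-x ^ 2 / 2) * (physHermite k x / hermC k) := rfl

lemma coeff_eq (k : ℕ) : 2 * (k : ℝ) / hermC k = Real.sqrt (2 * k) / hermC (k - 1) := by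
  cases k with
  | zero => simp
  | succ m =>
    have h : (m : ℕ) + 1 - 1 = m := rfl
    rw [h, hermC_succ]
    push_cast
    rw [div_eq_div_iff (mul_pos (Real.sqrt_pos.2 (by positivity : (0:ℝ) < 2 * ((m:ℝ)+1))) (hermC_pos m)).ne' (hermC_pos m).ne']
    rw [← mul_assoc, Real.mul_self_sqrt (by positivity)]

lemma key' (k : ℕ) (x : ℝ) :
    Real.exp (-x ^ 2 / 2) * (2 * (k:ℝ) * physHermite (k - 1) x / hermC k)
      = Real.sqrt (2 * k) * (Real.exp (-x ^ 2 / 2) * (physHermite (k - 1) x / hermC (k - 1))) := by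
  rw [mul_div_right_comm, coeff_eq k]
  ring

lemma hasDerivAt_oscFun (k : ℕ) (x : ℝ) :
    HasDerivAt (oscFun k) (Real.sqrt (2 * k) * oscFun (k - 1) x - x * oscFun k x) x := by
  have h1 : HasDerivAt (fun y : ℝ => -y ^ 2 / 2) (-x) x := by
    have := ((hasDerivAt_pow 2 x).neg).div_const 2
    exact this.congr_deriv (by push_cast; ring)
  have he : HasDerivAt (fun y : ℝ => Real.exp (-y ^ 2 / 2)) (-x * Real.exp (-x ^ 2 / 2)) x := by
    simpa [mul_comm] using h1.exp
  have hp : HasDerivAt (fun y : ℝ => physHermite k y / hermC k)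
      (2 * k * physHermite (k - 1) x / hermC k) x := (hasDerivAt_physHermite k x).div_const _
  have hmul : HasDerivAt (fun y : ℝ => Real.exp (-y ^ 2 / 2) * (physHermite k y / hermC k)) _ x :=
    he.mul hp
  have hfun : oscFun k = fun y : ℝ => Real.exp (-y ^ 2 / 2) * (physHermite k y / hermC k) := rfl
  rw [hfun]
  convert hmul using 1
  simp only [oscFun_eq]
  rw [key']
  ring

lemma deriv_oscFun (k : ℕ) (x : ℝ) :
    deriv (oscFun k) x = Real.sqrt (2 * k) * oscFun (k - 1) x - x * oscFun k x :=
  (hasDerivAt_oscFun k x).deriv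

lemma osc_rec (k : ℕ) (x : ℝ) :
    Real.sqrt (2 * (k + 1)) * oscFun (k + 1) x
      = 2 * x * oscFun k x - Real.sqrt (2 * k) * oscFun (k - 1) x := by
  have hpos : (0:ℝ) < Real.sqrt (2 * ((k:ℝ) + 1)) := Real.sqrt_pos.2 (by positivity)
  have cancel : ∀ s c N e : ℝ, s ≠ 0 → s * (e * (N / (s * c))) = e * (N / c) := by
    intro s c N e hs
    rcases eq_or_ne c 0 with rfl | hc
    · simp
    · field_simp
  rw [oscFun_eq (k+1), hermC_succ, physHermite_rec k x, cancel _ _ _ _ hpos.ne', sub_div, mul_sub,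
    key', oscFun_eq k, oscFun_eq (k-1)]
  ring

/-- growth bound products -/
noncomputable def Pb (k : ℕ) (r : ℝ) : ℝ :=
  ∏ j ∈ Finset.range k, (1 + Real.sqrt (2 / (j + 1)) * r)

lemma Pb_factor_nonneg {r : ℝ} (hr : 0 ≤ r) (j : ℕ) :
    (1:ℝ) ≤ 1 + Real.sqrt (2 / (j + 1)) * r := by
  nlinarith [Real.sqrt_nonneg (2 / ((j:ℝ) + 1))]

lemma Pb_succ (k : ℕ) (r : ℝ) :
    Pb (k + 1) r = Pb k r * (1 + Real.sqrt (2 / (k + 1)) * r) := Finset.prod_range_succ _ _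

lemma one_le_Pb {r : ℝ} (hr : 0 ≤ r) (k : ℕ) : 1 ≤ Pb k r := by
  induction k with
  | zero => simp [Pb]
  | succ k ih =>
    rw [Pb_succ]
    nlinarith [Pb_factor_nonneg hr k]

lemma Pb_pos {r : ℝ} (hr : 0 ≤ r) (k : ℕ) : 0 < Pb k r :=
  lt_of_lt_of_le one_pos (one_le_Pb hr k)

lemma Pb_mono_r {r s : ℝ} (hr : 0 ≤ r) (hrs : r ≤ s) (k : ℕ) : Pb k r ≤ Pb k s := by
  apply Finset.prod_le_prod
  · intro j _; positivity
  · intro j _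
    nlinarith [Real.sqrt_nonneg (2 / ((j:ℝ) + 1))]

lemma Pb_mono_k {r : ℝ} (hr : 0 ≤ r) {k m : ℕ} (hkm : k ≤ m) : Pb k r ≤ Pb m r := by
  induction m with
  | zero => simp_all
  | succ m ih =>
    rcases Nat.lt_or_ge k (m+1) with h | h
    · have := ih (by omega)
      rw [Pb_succ]
      nlinarith [Pb_pos hr k, Pb_factor_nonneg hr m, Pb_pos hr m]
    · have : k = m + 1 := by omega
      simp [this]

lemma sqrt_four : Real.sqrt 4 = 2 := by
  rw [show (4:ℝ) = 2^2 by norm_num, Real.sqrt_sq (by norm_num : (0:ℝ) ≤ 2)]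

lemma sqrt_factor_le_two (j : ℕ) : Real.sqrt (2 / (j + 1)) ≤ 2 := by
  have h : Real.sqrt (2 / (j + 1)) ≤ Real.sqrt 4 := by
    apply Real.sqrt_le_sqrt
    rw [div_le_iff₀ (by positivity)]
    nlinarith [Nat.cast_nonneg (α := ℝ) j]
  rwa [sqrt_four] at h

lemma sqrt_add_le' {a b : ℝ} (ha : 0 ≤ a) (hb : 0 ≤ b) :
    Real.sqrt (a + b) ≤ Real.sqrt a + Real.sqrt b := by
  have h : Real.sqrt (a + b) ≤ Real.sqrt ((Real.sqrt a + Real.sqrt b) ^ 2) := by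
    apply Real.sqrt_le_sqrt
    have h1 := Real.sq_sqrt ha
    have h2 := Real.sq_sqrt hb
    nlinarith [Real.sqrt_nonneg a, Real.sqrt_nonneg b]
  rwa [Real.sqrt_sq (by positivity)] at h

lemma Pb_mul_le {r s : ℝ} (hr : 0 ≤ r) (hs : 0 ≤ s) (k : ℕ) :
    Pb k r * Pb k s ≤ Pb k (r + s + 2 * r * s) := by
  rw [Pb, Pb, Pb, ← Finset.prod_mul_distrib]
  apply Finset.prod_le_prod
  · intro j _
    positivity
  · intro j _
    have h2 := sqrt_factor_le_two j
    have h0 := Real.sqrt_nonneg (2 / ((j:ℝ) + 1))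
    nlinarith [mul_nonneg (mul_nonneg h0 hr) hs,
      mul_le_mul_of_nonneg_right h2 (mul_nonneg (mul_nonneg h0 hr) hs)]

lemma sqrt_le_Pb_one (k : ℕ) : Real.sqrt (2 * k) ≤ Pb k 1 := by
  induction k with
  | zero => simp [Pb]
  | succ k ih =>
    rw [Pb_succ]
    rcases Nat.eq_zero_or_pos k with rfl | hk
    · simp only [Pb, Finset.range_zero, Finset.prod_empty, one_mul]
      push_cast
      nlinarith [Real.sq_sqrt (by norm_num : (0:ℝ) ≤ 2), Real.sqrt_nonneg (2:ℝ),
        Real.sqrt_nonneg (2/(0+1):ℝ), Real.sqrt_le_sqrt (by norm_num : (2:ℝ)/(0+1) ≤ 2),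
        Real.sqrt_le_sqrt (by norm_num : (2:ℝ) ≤ 2/(0+1)), Real.sqrt_le_sqrt (by norm_num : (2:ℝ)*1 ≤ 2)]
    · -- k ≥ 1 : sqrt(2(k+1)) ≤ sqrt(2k) + sqrt 2 ≤ Pb k 1 + Pb k 1 * sqrt(2/(k+1))
      have h1 : Real.sqrt (2 * ((k:ℝ)+1)) ≤ Real.sqrt (2 * k) + Real.sqrt 2 := by
        have := sqrt_add_le' (a := 2 * (k:ℝ)) (b := 2) (by positivity) (by norm_num)
        calc Real.sqrt (2*((k:ℝ)+1)) = Real.sqrt (2*(k:ℝ) + 2) := by ring_nf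
          _ ≤ _ := this
      have h2 : Real.sqrt 2 ≤ Real.sqrt (2 * k) * Real.sqrt (2 / (k + 1)) := by
        rw [← Real.sqrt_mul (by positivity)]
        apply Real.sqrt_le_sqrt
        rw [show 2*(k:ℝ)*(2/((k:ℝ)+1)) = 4*(k:ℝ)/((k:ℝ)+1) by ring, le_div_iff₀ (by positivity)]
        have : (1:ℝ) ≤ (k:ℝ) := by exact_mod_cast hk
        nlinarith
      have h3 : Real.sqrt (2 * k) ≤ Pb k 1 := ih
      have h4 : 0 ≤ Real.sqrt (2 / ((k:ℝ) + 1)) := Real.sqrt_nonneg _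
      push_cast
      nlinarith [Real.sqrt_nonneg (2 * (k:ℝ))]

lemma hermC_zero_ge_one : (1:ℝ) ≤ hermC 0 := by
  rw [hermC]
  have h1 : (1:ℝ) ≤ Real.sqrt Real.pi := by
    rw [show (1:ℝ) = Real.sqrt 1 from (Real.sqrt_one).symm]
    exact Real.sqrt_le_sqrt (by nlinarith [Real.pi_gt_three])
  calc (1:ℝ) = Real.sqrt 1 := (Real.sqrt_one).symm
    _ ≤ _ := Real.sqrt_le_sqrt (by norm_num; nlinarith [Real.pi_gt_three, h1])

lemma hermC_one_ge_one : (1:ℝ) ≤ hermC 1 := by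
  rw [hermC]
  have h1 : (1:ℝ) ≤ Real.sqrt Real.pi := by
    rw [show (1:ℝ) = Real.sqrt 1 from (Real.sqrt_one).symm]
    exact Real.sqrt_le_sqrt (by nlinarith [Real.pi_gt_three])
  calc (1:ℝ) = Real.sqrt 1 := (Real.sqrt_one).symm
    _ ≤ _ := Real.sqrt_le_sqrt (by norm_num; nlinarith [Real.pi_gt_three, h1])

lemma exp_neg_sq_le_one (x : ℝ) : Real.exp (-x ^ 2 / 2) ≤ 1 := by
  rw [← Real.exp_zero]
  apply Real.exp_le_exp.2
  nlinarith [sq_nonneg x]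

lemma oscFun_bound : ∀ k x, |oscFun k x| ≤ 2 * Pb k |x| := by
  have base0 : ∀ x : ℝ, |oscFun 0 x| ≤ 2 * Pb 0 |x| := by
    intro x
    rw [oscFun_eq]
    have hH : physHermite 0 x = 1 := rfl
    rw [hH]
    have he := exp_neg_sq_le_one x
    have hep := Real.exp_pos (-x ^ 2 / 2)
    have hc := hermC_zero_ge_one
    have hcp := hermC_pos 0
    rw [abs_of_nonneg (by positivity)]
    have h1 : (1:ℝ) / hermC 0 ≤ 1 := by rw [div_le_one hcp]; exact hc
    simp only [Pb, Finset.range_zero, Finset.prod_empty, mul_one]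
    nlinarith
  have base1 : ∀ x : ℝ, |oscFun 1 x| ≤ 2 * Pb 1 |x| := by
    intro x
    rw [oscFun_eq]
    have hH : physHermite 1 x = 2 * x := rfl
    rw [hH]
    have he := exp_neg_sq_le_one x
    have hep := Real.exp_pos (-x ^ 2 / 2)
    have hc := hermC_one_ge_one
    have hcp := hermC_pos 1
    have habs : |Real.exp (-x ^ 2 / 2) * (2 * x / hermC 1)|
        = Real.exp (-x ^ 2 / 2) * (2 * |x| / hermC 1) := by
      rw [abs_mul, abs_of_nonneg hep.le, abs_div, abs_of_nonneg hcp.le, abs_mul]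
      norm_num
    rw [habs]
    have hP : Pb 1 |x| = 1 + Real.sqrt 2 * |x| := by
      simp [Pb, Finset.prod_range_one]
    rw [hP]
    have h2 : 2 * |x| / hermC 1 ≤ 2 * |x| := by
      rw [div_le_iff₀ hcp]
      nlinarith [abs_nonneg x]
    have hs2 : (1:ℝ) ≤ Real.sqrt 2 := by
      rw [show (1:ℝ) = Real.sqrt 1 from (Real.sqrt_one).symm]
      exact Real.sqrt_le_sqrt (by norm_num)
    nlinarith [abs_nonneg x, mul_le_mul_of_nonneg_right he (by positivity : (0:ℝ) ≤ 2 * |x| / hermC 1)]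
  intro k
  induction k using Nat.strong_induction_on with
  | _ k ih =>
    match k with
    | 0 => exact base0
    | 1 => exact base1
    | (m + 2) =>
      intro x
      have h1 := ih (m + 1) (by omega) x
      have h0 := ih m (by omega) x
      have hrec := osc_rec (m + 1) x
      have hpos : (0:ℝ) < Real.sqrt (2 * ((m:ℝ) + 1 + 1)) := Real.sqrt_pos.2 (by positivity)
      have hxa : (0:ℝ) ≤ |x| := abs_nonneg x
      -- multiply both sides by sqrt(2(m+2))
      rw [← mul_le_mul_iff_right₀ hpos]
      have hL : Real.sqrt (2 * ((m:ℝ) + 1 + 1)) * |oscFun (m + 2) x|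
          = |2 * x * oscFun (m + 1) x - Real.sqrt (2 * ((m:ℝ)+1)) * oscFun m x| := by
        rw [← abs_of_nonneg hpos.le, ← abs_mul]
        congr 1
        push_cast at hrec ⊢
        simpa using hrec
      rw [hL]
      have hstep : |2 * x * oscFun (m + 1) x - Real.sqrt (2 * ((m:ℝ)+1)) * oscFun m x|
          ≤ 2 * |x| * (2 * Pb (m+1) |x|) + Real.sqrt (2 * ((m:ℝ)+1)) * (2 * Pb m |x|) := by
      -- triangle inequality
        calc |2 * x * oscFun (m + 1) x - Real.sqrt (2 * ((m:ℝ)+1)) * oscFun m x|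
            ≤ |2 * x * oscFun (m + 1) x| + |Real.sqrt (2 * ((m:ℝ)+1)) * oscFun m x| :=
              abs_sub _ _
          _ ≤ _ := by
              simp only [abs_mul]
              rw [abs_of_nonneg (Real.sqrt_nonneg (2 * ((m:ℝ)+1))), abs_two]
              have ha := mul_le_mul_of_nonneg_left h1 (by positivity : (0:ℝ) ≤ 2 * |x|)
              have hb := mul_le_mul_of_nonneg_left h0 (Real.sqrt_nonneg (2 * ((m:ℝ)+1)))
              nlinarith [abs_nonneg (oscFun (m+1) x), abs_nonneg (oscFun m x)]
      refine hstep.trans ?_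
      -- RHS expansion
      have hPsucc : Pb (m + 2) |x| = Pb (m+1) |x| * (1 + Real.sqrt (2 / ((m:ℝ) + 1 + 1)) * |x|) := by
        have := Pb_succ (m+1) |x|
        push_cast at this ⊢
        convert this using 4 <;> norm_num
      have hprod : Real.sqrt (2 * ((m:ℝ) + 1 + 1)) * Real.sqrt (2 / ((m:ℝ) + 1 + 1)) = 2 := by
        rw [← Real.sqrt_mul (by positivity)]
        rw [show 2 * ((m:ℝ) + 1 + 1) * (2 / ((m:ℝ) + 1 + 1)) = 4 by field_simp; ring]
        exact sqrt_four
      have hmono : Real.sqrt (2 * ((m:ℝ)+1)) ≤ Real.sqrt (2 * ((m:ℝ)+1+1)) :=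
        Real.sqrt_le_sqrt (by nlinarith)
      have hPle : Pb m |x| ≤ Pb (m+1) |x| := Pb_mono_k hxa (by omega)
      have hPpos : 0 < Pb (m+1) |x| := Pb_pos hxa _
      have hPmnn : 0 < Pb m |x| := Pb_pos hxa _
      rw [hPsucc]
      have h_a := mul_le_mul_of_nonneg_left hPle (Real.sqrt_nonneg (2 * ((m:ℝ)+1)))
      have h_b := mul_le_mul_of_nonneg_right hmono hPpos.le
      have key : Real.sqrt (2 * ((m:ℝ)+1+1))
            * (2 * (Pb (m+1) |x| * (1 + Real.sqrt (2/((m:ℝ)+1+1)) * |x|)))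
          = 2 * Real.sqrt (2*((m:ℝ)+1+1)) * Pb (m+1) |x| + 4 * |x| * Pb (m+1) |x| := by
        linear_combination (2 * |x| * Pb (m+1) |x|) * hprod
      linarith [h_a, h_b, key]

lemma master_summable {σ c : ℝ} (hσ0 : 0 < σ) (hσ1 : σ < 1) (hc : 0 ≤ c) :
    Summable (fun k : ℕ => σ ^ k * Pb k c) := by
  apply summable_of_ratio_norm_eventually_le (r := (1 + σ)/2) (by linarith)
  have hδ : 0 < (1 - σ)/(2*(c+1)) := div_pos (by linarith) (by positivity)
  set δ := (1 - σ)/(2*(c+1)) with hδdef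
  filter_upwards [Filter.eventually_ge_atTop ⌈2/δ^2⌉₊] with k hk
  have hkr : 2/δ^2 ≤ (k:ℝ) + 1 := by
    have h1 := Nat.le_ceil (2/δ^2)
    have h2 : (⌈2/δ^2⌉₊ : ℝ) ≤ k := by exact_mod_cast hk
    linarith
  have hε : Real.sqrt (2/((k:ℝ)+1)) ≤ δ := by
    rw [show δ = Real.sqrt (δ^2) by rw [Real.sqrt_sq hδ.le]]
    apply Real.sqrt_le_sqrt
    rw [div_le_iff₀ (by positivity)]
    rw [div_le_iff₀ (by positivity)] at hkr
    nlinarith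
  have hP := Pb_pos hc k
  have hε0 : 0 ≤ Real.sqrt (2/((k:ℝ)+1)) := Real.sqrt_nonneg _
  have hσk : 0 < σ ^ k := pow_pos hσ0 k
  have hP1 : 0 < Pb (k+1) c := Pb_pos hc (k+1)
  rw [Real.norm_of_nonneg (mul_nonneg (pow_nonneg hσ0.le _) hP1.le),
    Real.norm_of_nonneg (mul_nonneg (pow_nonneg hσ0.le _) hP.le)]
  rw [pow_succ, Pb_succ]
  -- σ^k * σ * (Pb k c * (1 + ε c)) ≤ (1+σ)/2 * (σ^k * Pb k c)
  have hfac : σ * (1 + Real.sqrt (2/((k:ℝ)+1)) * c) ≤ (1 + σ)/2 := by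
    have hεc : Real.sqrt (2/((k:ℝ)+1)) * c ≤ δ * (c + 1) :=
      by nlinarith
    have hδc : δ * (c + 1) = (1 - σ)/2 := by
      rw [hδdef]; field_simp
    nlinarith
  calc σ ^ k * σ * (Pb k c * (1 + Real.sqrt (2/((k:ℝ)+1)) * c))
      = (σ * (1 + Real.sqrt (2/((k:ℝ)+1)) * c)) * (σ ^ k * Pb k c) := by ring
    _ ≤ (1 + σ)/2 * (σ ^ k * Pb k c) := by
        apply mul_le_mul_of_nonneg_right hfac (mul_nonneg hσk.le hP.le)

lemma summable_of_osc_bound {f : ℕ → ℝ} (n : ℕ) {σ c A : ℝ} (hσ0 : 0 < σ) (hσ1 : σ < 1)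
    (hc : 0 ≤ c) (h : ∀ j, |f j| ≤ A * (σ ^ (n + j) * Pb (n + j) c)) : Summable f := by
  have hs : Summable (fun j : ℕ => A * (σ ^ (n + j) * Pb (n + j) c)) := by
    have h1 := (summable_nat_add_iff (f := fun k => σ ^ k * Pb k c) n).2
      (master_summable hσ0 hσ1 hc)
    have h2 : (fun j : ℕ => σ ^ (n + j) * Pb (n + j) c)
        = fun j : ℕ => σ ^ (j + n) * Pb (j + n) c := by
      funext j; rw [Nat.add_comm]
    exact Summable.mul_left A (h2 ▸ h1)
  exact Summable.of_norm_bounded hs (by simpa [Real.norm_eq_abs] using h)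

lemma shifted_master (n : ℕ) {σ c : ℝ} (hσ0 : 0 < σ) (hσ1 : σ < 1) (hc : 0 ≤ c) (A : ℝ) :
    Summable (fun j : ℕ => A * (σ ^ (n + j) * Pb (n + j) c)) := by
  have h1 := (summable_nat_add_iff (f := fun k => σ ^ k * Pb k c) n).2
    (master_summable hσ0 hσ1 hc)
  have h2 : (fun j : ℕ => σ ^ (n + j) * Pb (n + j) c)
      = fun j : ℕ => σ ^ (j + n) * Pb (j + n) c := by
    funext j; rw [Nat.add_comm]
  exact Summable.mul_left A (h2 ▸ h1)

lemma osc_abs_le (k : ℕ) {u r : ℝ} (h : |u| ≤ r) : |oscFun k u| ≤ 2 * Pb k r :=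
  (oscFun_bound k u).trans (by nlinarith [Pb_mono_r (abs_nonneg u) h k])

lemma deriv_osc_abs_le (k : ℕ) {u r : ℝ} (h : |u| ≤ r) :
    |deriv (oscFun k) u| ≤ 2 * (1 + r) * (Pb k 1 * Pb k r) := by
  have hr : 0 ≤ r := (abs_nonneg u).trans h
  rw [deriv_oscFun]
  have h1 : |Real.sqrt (2 * k) * oscFun (k-1) u - u * oscFun k u|
      ≤ Real.sqrt (2 * k) * |oscFun (k-1) u| + |u| * |oscFun k u| := by
    calc _ ≤ |Real.sqrt (2 * k) * oscFun (k-1) u| + |u * oscFun k u| := abs_sub _ _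
      _ = _ := by rw [abs_mul, abs_mul, abs_of_nonneg (Real.sqrt_nonneg _)]
  refine h1.trans ?_
  have h2 : |oscFun (k-1) u| ≤ 2 * Pb k r :=
    (osc_abs_le (k-1) h).trans (by nlinarith [Pb_mono_k hr (Nat.sub_le k 1)])
  have h3 : |oscFun k u| ≤ 2 * Pb k r := osc_abs_le k h
  have h4 := sqrt_le_Pb_one k
  have hP1 : 1 ≤ Pb k 1 := one_le_Pb (by norm_num) k
  have hPr : 0 < Pb k r := Pb_pos hr k
  have hA : Real.sqrt (2 * (k:ℝ)) * |oscFun (k-1) u| ≤ Pb k 1 * (2 * Pb k r) :=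
    mul_le_mul h4 h2 (abs_nonneg _) (zero_le_one.trans hP1)
  have hB : |u| * |oscFun k u| ≤ r * (2 * Pb k r) :=
    mul_le_mul h h3 (abs_nonneg _) hr
  have hC2 : r * (2 * Pb k r) ≤ r * (2 * (Pb k 1 * Pb k r)) := by nlinarith [mul_le_mul_of_nonneg_right hP1 (mul_nonneg hr hPr.le)]
  linarith

lemma prod_bound {r s C : ℝ} (k : ℕ) (hr : 0 ≤ r) (hs : 0 ≤ s) (hC : r + s + 2*r*s ≤ C) :
    Pb k r * Pb k s ≤ Pb k C :=
  (Pb_mul_le hr hs k).trans (Pb_mono_r (by positivity) hC k)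

set_option maxHeartbeats 2000000 in
/-- **Tail series identity in the proof of Lemma 3 (Section V of Tracy–Widom,
"Differential Equations for Dyson Processes").**  For `0 < σ < 1` the series
`T(x, y) = Σ_{k=n}^∞ σ^k φ_k(x) φ_k(y)` converges, is differentiable in `x` and in `y`
with derivatives given by term-wise differentiation, and satisfies
`(x + ∂_x)T(x, y) − σ(y − ∂_y)T(x, y) = 2 σ^n a_n φ_{n−1}(x) φ_n(y)` with `a_n = √(n/2)`. -/
theorem hermiteTail_identity (n : ℕ) (hn : 0 < n) (σ : ℝ) (hσ0 : 0 < σ) (hσ1 : σ < 1)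
    (x y : ℝ) :
    Summable (fun j : ℕ => σ ^ (n + j) * oscFun (n + j) x * oscFun (n + j) y) ∧
    Summable (fun j : ℕ => σ ^ (n + j) * deriv (oscFun (n + j)) x * oscFun (n + j) y) ∧
    Summable (fun j : ℕ => σ ^ (n + j) * oscFun (n + j) x * deriv (oscFun (n + j)) y) ∧
    HasDerivAt (fun u => hermiteTail n σ u y)
      (∑' j : ℕ, σ ^ (n + j) * deriv (oscFun (n + j)) x * oscFun (n + j) y) x ∧
    HasDerivAt (fun v => hermiteTail n σ x v)
      (∑' j : ℕ, σ ^ (n + j) * oscFun (n + j) x * deriv (oscFun (n + j)) y) y ∧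
    (x * hermiteTail n σ x y
        + (∑' j : ℕ, σ ^ (n + j) * deriv (oscFun (n + j)) x * oscFun (n + j) y))
      - σ * (y * hermiteTail n σ x y
        - (∑' j : ℕ, σ ^ (n + j) * oscFun (n + j) x * deriv (oscFun (n + j)) y))
    = 2 * σ ^ n * Real.sqrt (n / 2) * oscFun (n - 1) x * oscFun n y := by
  have ha0 : (0:ℝ) ≤ |x| := abs_nonneg x
  have hb0 : (0:ℝ) ≤ |y| := abs_nonneg y
  have hx1 : |x| ≤ |x| + 1 := by linarith
  have hy1 : |y| ≤ |y| + 1 := by linarith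
  set C : ℝ := 10 * (|x| + 2) * (|y| + 2) with hCdef
  have hC0 : (0:ℝ) ≤ C := by positivity
  -- bound for plain product terms
  have hboundT : ∀ (j : ℕ) (u v : ℝ), |u| ≤ |x| + 1 → |v| ≤ |y| + 1 →
      |σ ^ (n + j) * oscFun (n + j) u * oscFun (n + j) v|
        ≤ 4 * (σ ^ (n + j) * Pb (n + j) C) := by
    intro j u v hu hv
    have h1 := osc_abs_le (n+j) hu
    have h2 := osc_abs_le (n+j) hv
    have hσk : (0:ℝ) ≤ σ ^ (n+j) := pow_nonneg hσ0.le _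
    have hPu := Pb_pos (show (0:ℝ) ≤ |x|+1 by positivity) (n+j)
    have hPv := Pb_pos (show (0:ℝ) ≤ |y|+1 by positivity) (n+j)
    have hPP : Pb (n+j) (|x|+1) * Pb (n+j) (|y|+1) ≤ Pb (n+j) C :=
      prod_bound _ (by positivity) (by positivity) (by nlinarith [mul_nonneg ha0 hb0])
    have hm : |oscFun (n+j) u| * |oscFun (n+j) v|
        ≤ (2 * Pb (n+j) (|x|+1)) * (2 * Pb (n+j) (|y|+1)) :=
      mul_le_mul h1 h2 (abs_nonneg _) (by nlinarith)
    have hfin : |oscFun (n+j) u| * |oscFun (n+j) v| ≤ 4 * Pb (n+j) C := by nlinarith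
    calc |σ ^ (n + j) * oscFun (n + j) u * oscFun (n + j) v|
        = σ ^ (n+j) * (|oscFun (n+j) u| * |oscFun (n+j) v|) := by
          rw [abs_mul, abs_mul, abs_of_nonneg hσk]; ring
      _ ≤ σ ^ (n+j) * (4 * Pb (n+j) C) := mul_le_mul_of_nonneg_left hfin hσk
      _ = 4 * (σ ^ (n+j) * Pb (n+j) C) := by ring
  -- bound for terms with a derivative in the first slot
  have hboundA : ∀ (j : ℕ) (u : ℝ), |u| ≤ |x| + 1 →
      |σ ^ (n + j) * deriv (oscFun (n + j)) u * oscFun (n + j) y|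
        ≤ (4 * (2 + |x|)) * (σ ^ (n + j) * Pb (n + j) C) := by
    intro j u hu
    have h1 := deriv_osc_abs_le (n+j) hu
    have h2 := osc_abs_le (n+j) hy1
    have hσk : (0:ℝ) ≤ σ ^ (n+j) := pow_nonneg hσ0.le _
    have hPu := Pb_pos (show (0:ℝ) ≤ |x|+1 by positivity) (n+j)
    have hPv := Pb_pos (show (0:ℝ) ≤ |y|+1 by positivity) (n+j)
    have hP1' := Pb_pos (show (0:ℝ) ≤ (1:ℝ) by norm_num) (n+j)
    have hq1 : Pb (n+j) 1 * Pb (n+j) (|x|+1) ≤ Pb (n+j) (3*|x| + 4) :=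
      prod_bound _ (by norm_num) (by positivity) (by nlinarith)
    have hq1' := Pb_pos (show (0:ℝ) ≤ 3*|x|+4 by positivity) (n+j)
    have hq2 : Pb (n+j) (3*|x|+4) * Pb (n+j) (|y|+1) ≤ Pb (n+j) C :=
      prod_bound _ (by positivity) (by positivity) (by nlinarith [mul_nonneg ha0 hb0])
    have hm : |deriv (oscFun (n+j)) u| * |oscFun (n+j) y|
        ≤ (2 * (1 + (|x|+1)) * (Pb (n+j) 1 * Pb (n+j) (|x|+1))) * (2 * Pb (n+j) (|y|+1)) :=
      mul_le_mul h1 h2 (abs_nonneg _) (by nlinarith [mul_pos hP1' hPu])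
    have hfin : |deriv (oscFun (n+j)) u| * |oscFun (n+j) y|
        ≤ (4 * (2 + |x|)) * Pb (n+j) C := by
      have hstep1 : Pb (n+j) 1 * Pb (n+j) (|x|+1) * Pb (n+j) (|y|+1) ≤ Pb (n+j) C := by
        calc Pb (n+j) 1 * Pb (n+j) (|x|+1) * Pb (n+j) (|y|+1)
            ≤ Pb (n+j) (3*|x|+4) * Pb (n+j) (|y|+1) :=
              mul_le_mul_of_nonneg_right hq1 hPv.le
          _ ≤ Pb (n+j) C := hq2
      calc |deriv (oscFun (n+j)) u| * |oscFun (n+j) y|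
          ≤ (2 * (1 + (|x|+1)) * (Pb (n+j) 1 * Pb (n+j) (|x|+1))) * (2 * Pb (n+j) (|y|+1)) := hm
        _ = (4 * (2 + |x|)) * (Pb (n+j) 1 * Pb (n+j) (|x|+1) * Pb (n+j) (|y|+1)) := by ring
        _ ≤ (4 * (2 + |x|)) * Pb (n+j) C :=
            mul_le_mul_of_nonneg_left hstep1 (by positivity)
    calc |σ ^ (n + j) * deriv (oscFun (n + j)) u * oscFun (n + j) y|
        = σ ^ (n+j) * (|deriv (oscFun (n+j)) u| * |oscFun (n+j) y|) := by
          rw [abs_mul, abs_mul, abs_of_nonneg hσk]; ring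
      _ ≤ σ ^ (n+j) * ((4 * (2 + |x|)) * Pb (n+j) C) := mul_le_mul_of_nonneg_left hfin hσk
      _ = (4 * (2 + |x|)) * (σ ^ (n+j) * Pb (n+j) C) := by ring
  -- bound for terms with a derivative in the second slot
  have hboundB : ∀ (j : ℕ) (v : ℝ), |v| ≤ |y| + 1 →
      |σ ^ (n + j) * oscFun (n + j) x * deriv (oscFun (n + j)) v|
        ≤ (4 * (2 + |y|)) * (σ ^ (n + j) * Pb (n + j) C) := by
    intro j v hv
    have h1 := osc_abs_le (n+j) hx1
    have h2 := deriv_osc_abs_le (n+j) hv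
    have hσk : (0:ℝ) ≤ σ ^ (n+j) := pow_nonneg hσ0.le _
    have hPu := Pb_pos (show (0:ℝ) ≤ |x|+1 by positivity) (n+j)
    have hPv := Pb_pos (show (0:ℝ) ≤ |y|+1 by positivity) (n+j)
    have hP1' := Pb_pos (show (0:ℝ) ≤ (1:ℝ) by norm_num) (n+j)
    have hq1 : Pb (n+j) 1 * Pb (n+j) (|y|+1) ≤ Pb (n+j) (3*|y| + 4) :=
      prod_bound _ (by norm_num) (by positivity) (by nlinarith)
    have hq1' := Pb_pos (show (0:ℝ) ≤ 3*|y|+4 by positivity) (n+j)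
    have hq2 : Pb (n+j) (3*|y|+4) * Pb (n+j) (|x|+1) ≤ Pb (n+j) C :=
      prod_bound _ (by positivity) (by positivity) (by nlinarith [mul_nonneg ha0 hb0])
    have hm : |oscFun (n+j) x| * |deriv (oscFun (n+j)) v|
        ≤ (2 * Pb (n+j) (|x|+1)) * (2 * (1 + (|y|+1)) * (Pb (n+j) 1 * Pb (n+j) (|y|+1))) :=
      mul_le_mul h1 h2 (abs_nonneg _) (by nlinarith)
    have hfin : |oscFun (n+j) x| * |deriv (oscFun (n+j)) v|
        ≤ (4 * (2 + |y|)) * Pb (n+j) C := by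
      have hstep1 : Pb (n+j) 1 * Pb (n+j) (|y|+1) * Pb (n+j) (|x|+1) ≤ Pb (n+j) C := by
        calc Pb (n+j) 1 * Pb (n+j) (|y|+1) * Pb (n+j) (|x|+1)
            ≤ Pb (n+j) (3*|y|+4) * Pb (n+j) (|x|+1) :=
              mul_le_mul_of_nonneg_right hq1 hPu.le
          _ ≤ Pb (n+j) C := hq2
      calc |oscFun (n+j) x| * |deriv (oscFun (n+j)) v|
          ≤ (2 * Pb (n+j) (|x|+1)) * (2 * (1 + (|y|+1)) * (Pb (n+j) 1 * Pb (n+j) (|y|+1))) := hm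
        _ = (4 * (2 + |y|)) * (Pb (n+j) 1 * Pb (n+j) (|y|+1) * Pb (n+j) (|x|+1)) := by ring
        _ ≤ (4 * (2 + |y|)) * Pb (n+j) C :=
            mul_le_mul_of_nonneg_left hstep1 (by positivity)
    calc |σ ^ (n + j) * oscFun (n + j) x * deriv (oscFun (n + j)) v|
        = σ ^ (n+j) * (|oscFun (n+j) x| * |deriv (oscFun (n+j)) v|) := by
          rw [abs_mul, abs_mul, abs_of_nonneg hσk]; ring
      _ ≤ σ ^ (n+j) * ((4 * (2 + |y|)) * Pb (n+j) C) := mul_le_mul_of_nonneg_left hfin hσk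
      _ = (4 * (2 + |y|)) * (σ ^ (n+j) * Pb (n+j) C) := by ring
  -- summabilities
  have hS1 : Summable (fun j : ℕ => σ ^ (n + j) * oscFun (n + j) x * oscFun (n + j) y) :=
    summable_of_osc_bound n hσ0 hσ1 hC0 (fun j => hboundT j x y hx1 hy1)
  have hS2 : Summable (fun j : ℕ => σ ^ (n + j) * deriv (oscFun (n + j)) x * oscFun (n + j) y) :=
    summable_of_osc_bound n hσ0 hσ1 hC0 (fun j => hboundA j x hx1)
  have hS3 : Summable (fun j : ℕ => σ ^ (n + j) * oscFun (n + j) x * deriv (oscFun (n + j)) y) :=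
    summable_of_osc_bound n hσ0 hσ1 hC0 (fun j => hboundB j y hy1)
  -- the telescoping series
  set gser : ℕ → ℝ := fun j =>
    σ ^ (n + j) * Real.sqrt (2 * (n + j)) * oscFun (n + j - 1) x * oscFun (n + j) y
    with hgser
  have claim1 : ∀ j : ℕ, gser j = x * (σ ^ (n + j) * oscFun (n + j) x * oscFun (n + j) y)
      + σ ^ (n + j) * deriv (oscFun (n + j)) x * oscFun (n + j) y := by
    intro j
    rw [hgser]; simp only []
    rw [deriv_oscFun]; push_cast; ring
  have hboundG : ∀ j : ℕ, |gser j| ≤ (8 * (2 + |x|)) * (σ ^ (n + j) * Pb (n + j) C) := by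
    intro j
    rw [claim1 j]
    have t1 := hboundT j x y hx1 hy1
    have t2 := hboundA j x hx1
    have hσP : (0:ℝ) ≤ σ ^ (n+j) * Pb (n+j) C :=
      mul_nonneg (pow_nonneg hσ0.le _) (Pb_pos hC0 _).le
    have habs : |x * (σ ^ (n + j) * oscFun (n + j) x * oscFun (n + j) y)
          + σ ^ (n + j) * deriv (oscFun (n + j)) x * oscFun (n + j) y|
        ≤ |x| * |σ ^ (n + j) * oscFun (n + j) x * oscFun (n + j) y|
          + |σ ^ (n + j) * deriv (oscFun (n + j)) x * oscFun (n + j) y| := by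
      calc _ ≤ |x * (σ ^ (n + j) * oscFun (n + j) x * oscFun (n + j) y)|
            + |σ ^ (n + j) * deriv (oscFun (n + j)) x * oscFun (n + j) y| := abs_add_le _ _
        _ = _ := by rw [abs_mul]
    refine habs.trans ?_
    have hm1 := mul_le_mul_of_nonneg_left t1 ha0
    nlinarith [mul_nonneg ha0 hσP]
  have hSg : Summable gser := summable_of_osc_bound n hσ0 hσ1 hC0 hboundG
  have hSg1 : Summable (fun j : ℕ => gser (j + 1)) := (summable_nat_add_iff 1).2 hSg
  -- from membership in a ball
  have hu_ball : ∀ c u : ℝ, u ∈ Metric.ball c 1 → |u| ≤ |c| + 1 := by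
    intro c u hu
    have hd := Metric.mem_ball.mp hu
    rw [Real.dist_eq] at hd
    calc |u| = |(u - c) + c| := by ring_nf
      _ ≤ |u - c| + |c| := abs_add_le _ _
      _ ≤ |c| + 1 := by linarith [le_of_lt hd]
  -- derivative in x
  have hDx : HasDerivAt (fun u : ℝ => ∑' j : ℕ, σ ^ (n + j) * oscFun (n + j) u * oscFun (n + j) y)
      (∑' j : ℕ, σ ^ (n + j) * deriv (oscFun (n + j)) x * oscFun (n + j) y) x := by
    refine hasDerivAt_tsum_of_isPreconnected
      (u := fun j : ℕ => (4 * (2 + |x|)) * (σ ^ (n + j) * Pb (n + j) C))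
      (g' := fun (j : ℕ) (u : ℝ) => σ ^ (n + j) * deriv (oscFun (n + j)) u * oscFun (n + j) y)
      (shifted_master n hσ0 hσ1 hC0 _) Metric.isOpen_ball (convex_ball x 1).isPreconnected
      (fun j u _ => ?_) (fun j u hu => ?_) (Metric.mem_ball_self one_pos) hS1
      (Metric.mem_ball_self one_pos)
    · show HasDerivAt (fun u : ℝ => σ ^ (n + j) * oscFun (n + j) u * oscFun (n + j) y)
        (σ ^ (n + j) * deriv (oscFun (n + j)) u * oscFun (n + j) y) u
      rw [deriv_oscFun]
      exact ((hasDerivAt_oscFun (n+j) u).const_mul (σ ^ (n+j))).mul_const (oscFun (n+j) y)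
    · rw [Real.norm_eq_abs]
      exact hboundA j u (hu_ball x u hu)
  -- derivative in y
  have hDy : HasDerivAt (fun v : ℝ => ∑' j : ℕ, σ ^ (n + j) * oscFun (n + j) x * oscFun (n + j) v)
      (∑' j : ℕ, σ ^ (n + j) * oscFun (n + j) x * deriv (oscFun (n + j)) y) y := by
    refine hasDerivAt_tsum_of_isPreconnected
      (u := fun j : ℕ => (4 * (2 + |y|)) * (σ ^ (n + j) * Pb (n + j) C))
      (g' := fun (j : ℕ) (v : ℝ) => σ ^ (n + j) * oscFun (n + j) x * deriv (oscFun (n + j)) v)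
      (shifted_master n hσ0 hσ1 hC0 _) Metric.isOpen_ball (convex_ball y 1).isPreconnected
      (fun j v _ => ?_) (fun j v hv => ?_) (Metric.mem_ball_self one_pos) hS1
      (Metric.mem_ball_self one_pos)
    · show HasDerivAt (fun v : ℝ => σ ^ (n + j) * oscFun (n + j) x * oscFun (n + j) v)
        (σ ^ (n + j) * oscFun (n + j) x * deriv (oscFun (n + j)) v) v
      rw [deriv_oscFun]
      exact (hasDerivAt_oscFun (n+j) v).const_mul (σ ^ (n+j) * oscFun (n+j) x)
    · rw [Real.norm_eq_abs]
      exact hboundB j v (hu_ball y v hv)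
  -- the algebraic identity
  have hxT : x * hermiteTail n σ x y
      = ∑' j : ℕ, x * (σ ^ (n + j) * oscFun (n + j) x * oscFun (n + j) y) := by
    rw [show hermiteTail n σ x y
      = ∑' j : ℕ, σ ^ (n + j) * oscFun (n + j) x * oscFun (n + j) y from rfl, ← tsum_mul_left]
  have hyT : y * hermiteTail n σ x y
      = ∑' j : ℕ, y * (σ ^ (n + j) * oscFun (n + j) x * oscFun (n + j) y) := by
    rw [show hermiteTail n σ x y
      = ∑' j : ℕ, σ ^ (n + j) * oscFun (n + j) x * oscFun (n + j) y from rfl, ← tsum_mul_left]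
  have hEq1 : x * hermiteTail n σ x y
      + (∑' j : ℕ, σ ^ (n + j) * deriv (oscFun (n + j)) x * oscFun (n + j) y)
      = ∑' j : ℕ, gser j := by
    rw [hxT, ← Summable.tsum_add (hS1.mul_left x) hS2]
    exact tsum_congr fun j => (claim1 j).symm
  have claim2 : ∀ j : ℕ, σ * (y * (σ ^ (n + j) * oscFun (n + j) x * oscFun (n + j) y)
      - σ ^ (n + j) * oscFun (n + j) x * deriv (oscFun (n + j)) y) = gser (j + 1) := by
    intro j
    have hr := osc_rec (n+j) y
    rw [deriv_oscFun, hgser]; simp only []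
    rw [show n + (j+1) = (n+j) + 1 from rfl, show (n+j) + 1 - 1 = n + j from rfl]
    push_cast at hr ⊢
    ring_nf at hr ⊢
    linear_combination (-(σ ^ (n+j) * σ * oscFun (n+j) x)) * hr
  have hEq2 : σ * (y * hermiteTail n σ x y
      - (∑' j : ℕ, σ ^ (n + j) * oscFun (n + j) x * deriv (oscFun (n + j)) y))
      = ∑' j : ℕ, gser (j + 1) := by
    rw [hyT, ← Summable.tsum_sub (hS1.mul_left y) hS3, ← tsum_mul_left]
    exact tsum_congr claim2
  have hzero : ∑' j : ℕ, gser j = gser 0 + ∑' j : ℕ, gser (j + 1) := Summable.tsum_eq_zero_add hSg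
  have hg0eq : gser 0 = 2 * σ ^ n * Real.sqrt (n / 2) * oscFun (n - 1) x * oscFun n y := by
    rw [hgser]; simp only [Nat.add_zero, Nat.cast_zero, add_zero]
    have hsq : Real.sqrt (2 * (n:ℝ)) = 2 * Real.sqrt ((n:ℝ) / 2) := by
      rw [show (2:ℝ) * (n:ℝ) = 4 * ((n:ℝ)/2) by ring,
        Real.sqrt_mul (by norm_num : (0:ℝ) ≤ 4), sqrt_four]
    rw [hsq]; ring
  exact ⟨hS1, hS2, hS3, hDx, hDy, by linarith [hEq1, hEq2, hzero, hg0eq]⟩
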